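/- If R is an irreducible root system spanning a Euclidean space E and Q is a quadratic form on E with Q(α) = 0 for every root α ∈ R, then Q is identically zero. -/
import Mathlib

open scoped RealInnerProductSpace
open QuadraticMap

section Aux

variable {E : Type*} [NormedAddCommGroup E] [InnerProductSpace ℝ E]

/-- Chains of length `n` in `R` with consecutive elements non-orthogonal. -/
def RSconn (R : Set E) : ℕ → E → E → Prop
  | 0, α, β => α = β
  | n+1, α, β => ∃ γ, γ ∈ R ∧ ⟪α, γ⟫ ≠ 0 ∧ RSconn R n γ β

lemma RSconn_snoc {R : Set E} :
    ∀ (n : ℕ) {α γ β : E}, RSconn R n α γ → β ∈ R → ⟪γ, β⟫ ≠ 0 → RSconn R (n+1) α β := by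
  intro n
  induction n with
  | zero => intro α γ β h hβ hne; cases h; exact ⟨β, hβ, hne, rfl⟩
  | succ n ih =>
    rintro α γ β ⟨δ, hδ, hne', h⟩ hβ hne
    exact ⟨δ, hδ, hne', ih h hβ hne⟩

end Aux

/-- A (reduced) root system: a finite nonempty set of nonzero vectors in a real inner
product space, closed under negation and reflections, with integrality, and reduced. -/
structure IsRootSystem {E : Type*} [NormedAddCommGroup E] [InnerProductSpace ℝ E]
    (R : Set E) : Prop where
  finite : R.Finite
  nonempty : R.Nonempty
  ne_zero : ∀ α ∈ R, α ≠ 0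
  neg_mem : ∀ α ∈ R, -α ∈ R
  reduced : ∀ α ∈ R, ∀ t : ℝ, t • α ∈ R → t = 1 ∨ t = -1
  reflect_mem : ∀ α ∈ R, ∀ β ∈ R, β - (2 * ⟪β, α⟫ / ⟪α, α⟫) • α ∈ R
  integral : ∀ α ∈ R, ∀ β ∈ R, ∃ n : ℤ, 2 * ⟪β, α⟫ / ⟪α, α⟫ = (n : ℝ)

/-- Irreducibility: `R` admits no decomposition into two nonempty mutually
orthogonal parts. -/
def IsIrreducibleRS {E : Type*} [NormedAddCommGroup E] [InnerProductSpace ℝ E]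
    (R : Set E) : Prop :=
  ∀ R₁ R₂ : Set E, R₁ ∪ R₂ = R → R₁.Nonempty → R₂.Nonempty →
    ¬ (∀ α ∈ R₁, ∀ β ∈ R₂, ⟪α, β⟫ = 0)

section Aux2

variable {E : Type*} [NormedAddCommGroup E] [InnerProductSpace ℝ E]

/-- If two roots are non-orthogonal, the polar form of `Q` vanishes on them. -/
lemma polar_eq_zero_of_inner_ne_zero {R : Set E} (hR : IsRootSystem R)
    (Q : QuadraticForm ℝ E) (hQ : ∀ α ∈ R, Q α = 0)
    {α β : E} (hα : α ∈ R) (hβ : β ∈ R) (hne : ⟪α, β⟫ ≠ 0) :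
    polar Q α β = 0 := by
  have hαα : ⟪α, α⟫ ≠ (0:ℝ) := inner_self_ne_zero.mpr (hR.ne_zero α hα)
  have hβα : ⟪β, α⟫ ≠ (0:ℝ) := by rwa [real_inner_comm]
  have hcne : (2 * ⟪β, α⟫ / ⟪α, α⟫) ≠ 0 := div_ne_zero (mul_ne_zero two_ne_zero hβα) hαα
  have hmem := hR.reflect_mem α hα β hβ
  have h0 := hQ _ hmem
  rw [sub_eq_add_neg, QuadraticMap.map_add (⇑Q), ← neg_smul, QuadraticMap.map_smul,
    polar_smul_right, hQ β hβ, hQ α hα, smul_eq_mul, smul_eq_mul] at h0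
  have h0' : -(2 * ⟪β, α⟫ / ⟪α, α⟫) * polar Q β α = 0 := by linarith
  rw [polar_comm]
  rcases mul_eq_zero.mp h0' with h | h
  · exact absurd (neg_eq_zero.mp h) hcne
  · exact h

lemma polar_eq_zero_of_conn {R : Set E} (hR : IsRootSystem R)
    (Q : QuadraticForm ℝ E) (hQ : ∀ α ∈ R, Q α = 0) :
    ∀ (n : ℕ) (α β : E), α ∈ R → β ∈ R → RSconn R n α β → polar Q α β = 0 := by
  intro n
  induction n using Nat.strong_induction_on with
  | _ n ih =>
    match n, ih with
    | 0, _ =>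
      rintro α β hα hβ rfl
      rw [polar_self, hQ α hα, smul_zero]
    | 1, _ =>
      rintro α β hα hβ ⟨γ, hγ, hne, rfl⟩
      exact polar_eq_zero_of_inner_ne_zero hR Q hQ hα hβ hne
    | (n+2), ih =>
      rintro α β hα hβ ⟨γ₁, hγ₁, hαγ₁, γ₂, hγ₂, hγ₁γ₂, hconn⟩
      by_cases h : ⟪α, γ₂⟫ = 0
      · -- reflect α through γ₁
        set d : ℝ := 2 * ⟪α, γ₁⟫ / ⟪γ₁, γ₁⟫ with hd
        have hγγ : ⟪γ₁, γ₁⟫ ≠ (0:ℝ) := inner_self_ne_zero.mpr (hR.ne_zero γ₁ hγ₁)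
        have hdne : d ≠ 0 := div_ne_zero (mul_ne_zero two_ne_zero hαγ₁) hγγ
        have hα' : α - d • γ₁ ∈ R := hR.reflect_mem γ₁ hγ₁ α hα
        have hinner : ⟪α - d • γ₁, γ₂⟫ ≠ 0 := by
          rw [inner_sub_left, real_inner_smul_left, h, zero_sub, neg_ne_zero]
          exact mul_ne_zero hdne hγ₁γ₂
        have h1 : polar Q (α - d • γ₁) β = 0 :=
          ih (n+1) (by omega) _ β hα' hβ ⟨γ₂, hγ₂, hinner, hconn⟩
        have h2 : polar Q γ₁ β = 0 :=
          ih (n+1) (by omega) γ₁ β hγ₁ hβ ⟨γ₂, hγ₂, hγ₁γ₂, hconn⟩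
        have := h1
        rw [polar_sub_left, polar_smul_left, h2, smul_zero, sub_zero] at this
        exact this
      · exact ih (n+1) (by omega) α β hα hβ ⟨γ₂, hγ₂, h, hconn⟩

lemma rs_connected {R : Set E} (hR : IsRootSystem R) (hirr : IsIrreducibleRS R) :
    ∀ α ∈ R, ∀ β ∈ R, ∃ n, RSconn R n α β := by
  intro α hα β hβ
  by_contra hcon
  set R₁ : Set E := {γ ∈ R | ∃ n, RSconn R n α γ} with hR₁
  set R₂ : Set E := {γ ∈ R | ¬ ∃ n, RSconn R n α γ} with hR₂
  have hun : R₁ ∪ R₂ = R := by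
    ext γ; constructor
    · rintro (⟨h, _⟩ | ⟨h, _⟩) <;> exact h
    · intro h; by_cases hc : ∃ n, RSconn R n α γ
      · exact Or.inl ⟨h, hc⟩
      · exact Or.inr ⟨h, hc⟩
  refine hirr R₁ R₂ hun ⟨α, hα, 0, rfl⟩ ⟨β, hβ, hcon⟩ ?_
  rintro γ ⟨hγR, n, hn⟩ δ ⟨hδR, hδ⟩
  by_contra hne
  exact hδ ⟨n + 1, RSconn_snoc n hn hδR hne⟩

end Aux2

/-- A quadratic form vanishing on all roots of an irreducible root system spanning `E`
vanishes identically. -/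
theorem quadraticForm_eq_zero_of_vanishing_on_roots
    {E : Type*} [NormedAddCommGroup E] [InnerProductSpace ℝ E]
    (R : Set E) (hR : IsRootSystem R) (hirr : IsIrreducibleRS R)
    (hspan : Submodule.span ℝ R = ⊤)
    (Q : QuadraticForm ℝ E) (hQ : ∀ α ∈ R, Q α = 0) :
    Q = 0 := by
  have key : ∀ α ∈ R, ∀ β ∈ R, polar Q α β = 0 := by
    intro α hα β hβ
    obtain ⟨n, hn⟩ := rs_connected hR hirr α hα β hβ
    exact polar_eq_zero_of_conn hR Q hQ n α β hα hβ hn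
  have hbil : Q.polarBilin = 0 := by
    apply LinearMap.ext_on hspan
    intro x hx
    apply LinearMap.ext_on hspan
    intro y hy
    simpa using key x hx y hy
  ext x
  have h2 : polar Q x x = 0 := by
    simpa using LinearMap.congr_fun (LinearMap.congr_fun hbil x) x
  have h3 : polar Q x x = Q x + Q x := by rw [polar_self, two_smul]
  have h4 : Q x + Q x = 0 := by rw [← h3, h2]
  simp only [QuadraticMap.zero_apply]
  linarith
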